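/- arXiv:1610.00043 — 2 statements merged into one kernel-verified Lean document; each statement's English description precedes it below -/
import Mathlib

section
/- The graph 𝒢 constructed from a 4-regular graph G via an Eulerian orientation is 3-regular: its vertices are the directed edges of G_d, and each vertex (v_ℓ, v_m) has exactly 3 neighbors. -/
open SimpleGraph

/-- The in-edge `(a, v)` is paired with the out-edge `(v, b)` at `v`:
either `(a,v) = min In(v)` and `(v,b) = min Out(v)`, or
`(a,v) = max In(v)` and `(v,b) = max Out(v)`. -/
def PairedAt {V : Type*} [LinearOrder V] (D : V → V → Prop) (v a b : V) : Prop :=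
  D a v ∧ D v b ∧
    (((∀ a', D a' v → a ≤ a') ∧ (∀ b', D v b' → b ≤ b')) ∨
     ((∀ a', D a' v → a' ≤ a) ∧ (∀ b', D v b' → b' ≤ b)))

section helpers
variable {V : Type*} [LinearOrder V]

lemma ncard_two_other {s : Set V} (h : s.ncard = 2) {a : V} (ha : a ∈ s) :
    ∃ b, b ≠ a ∧ s = {a, b} := by
  obtain ⟨x, y, hxy, rfl⟩ := Set.ncard_eq_two.mp h
  simp only [Set.mem_insert_iff, Set.mem_singleton_iff] at ha
  rcases ha with rfl | rfl
  · exact ⟨y, hxy.symm, rfl⟩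
  · exact ⟨x, hxy, Set.pair_comm _ _⟩

lemma pairedAt_exists_out (D : V → V → Prop) {v a : V}
    (hinv : {u | D u v}.ncard = 2) (houtv : {u | D v u}.ncard = 2)
    (ha : D a v) : ∃ b, PairedAt D v a b := by
  obtain ⟨a', ha'ne, hsin⟩ := ncard_two_other hinv ha
  obtain ⟨o1, o2, ho, hsout⟩ := Set.ncard_eq_two.mp houtv
  have ho1 : D v o1 := by have : o1 ∈ {u | D v u} := by rw [hsout]; simp
                          exact this
  have ho2 : D v o2 := by have : o2 ∈ {u | D v u} := by rw [hsout]; simp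
                          exact this
  have hmemin : ∀ x, D x v → x = a ∨ x = a' := by
    intro x hx
    have : x ∈ ({a, a'} : Set V) := hsin ▸ hx
    simpa using this
  have hmemout : ∀ x, D v x → x = o1 ∨ x = o2 := by
    intro x hx
    have : x ∈ ({o1, o2} : Set V) := hsout ▸ hx
    simpa using this
  by_cases hle : a ≤ a'
  · refine ⟨min o1 o2, ha, ?_, Or.inl ⟨?_, ?_⟩⟩
    · rcases min_choice o1 o2 with h | h <;> rw [h] <;> assumption
    · intro x hx; rcases hmemin x hx with rfl | rfl
      · exact le_refl _
      · exact hle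
    · intro x hx; rcases hmemout x hx with rfl | rfl
      · exact min_le_left _ _
      · exact min_le_right _ _
  · refine ⟨max o1 o2, ha, ?_, Or.inr ⟨?_, ?_⟩⟩
    · rcases max_choice o1 o2 with h | h <;> rw [h] <;> assumption
    · intro x hx; rcases hmemin x hx with rfl | rfl
      · exact le_refl _
      · exact le_of_lt (lt_of_not_ge hle)
    · intro x hx; rcases hmemout x hx with rfl | rfl
      · exact le_max_left _ _
      · exact le_max_right _ _

lemma pairedAt_exists_in (D : V → V → Prop) {a v : V}
    (hina : {u | D u a}.ncard = 2) (houta : {u | D a u}.ncard = 2)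
    (hav : D a v) : ∃ c, PairedAt D a c v := by
  obtain ⟨v', hv'ne, hsout⟩ := ncard_two_other houta hav
  obtain ⟨i1, i2, hi, hsin⟩ := Set.ncard_eq_two.mp hina
  have hi1 : D i1 a := by have : i1 ∈ {u | D u a} := by rw [hsin]; simp
                          exact this
  have hi2 : D i2 a := by have : i2 ∈ {u | D u a} := by rw [hsin]; simp
                          exact this
  have hmemin : ∀ x, D x a → x = i1 ∨ x = i2 := by
    intro x hx
    have : x ∈ ({i1, i2} : Set V) := hsin ▸ hx
    simpa using this
  have hmemout : ∀ x, D a x → x = v ∨ x = v' := by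
    intro x hx
    have : x ∈ ({v, v'} : Set V) := hsout ▸ hx
    simpa using this
  by_cases hle : v ≤ v'
  · refine ⟨min i1 i2, ?_, hav, Or.inl ⟨?_, ?_⟩⟩
    · rcases min_choice i1 i2 with h | h <;> rw [h] <;> assumption
    · intro x hx; rcases hmemin x hx with rfl | rfl
      · exact min_le_left _ _
      · exact min_le_right _ _
    · intro x hx; rcases hmemout x hx with rfl | rfl
      · exact le_refl _
      · exact hle
  · refine ⟨max i1 i2, ?_, hav, Or.inr ⟨?_, ?_⟩⟩
    · rcases max_choice i1 i2 with h | h <;> rw [h] <;> assumption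
    · intro x hx; rcases hmemin x hx with rfl | rfl
      · exact le_max_left _ _
      · exact le_max_right _ _
    · intro x hx; rcases hmemout x hx with rfl | rfl
      · exact le_refl _
      · exact le_of_lt (lt_of_not_ge hle)

lemma pairedAt_unique_out (D : V → V → Prop) {v a b c : V}
    (hinv : {u | D u v}.ncard = 2)
    (h1 : PairedAt D v a b) (h2 : PairedAt D v a c) : b = c := by
  obtain ⟨ha, hb, h1'⟩ := h1
  obtain ⟨-, hc, h2'⟩ := h2
  obtain ⟨a', ha'ne, hsin⟩ := ncard_two_other hinv ha
  have ha' : D a' v := by have : a' ∈ {u | D u v} := by rw [hsin]; simp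
                          exact this
  rcases h1' with ⟨hm1, ho1⟩ | ⟨hm1, ho1⟩ <;> rcases h2' with ⟨hm2, ho2⟩ | ⟨hm2, ho2⟩
  · exact le_antisymm (ho1 c hc) (ho2 b hb)
  · exact absurd (le_antisymm (hm2 a' ha') (hm1 a' ha')) ha'ne
  · exact absurd (le_antisymm (hm1 a' ha') (hm2 a' ha')) ha'ne
  · exact le_antisymm (ho2 b hb) (ho1 c hc)

lemma pairedAt_unique_in (D : V → V → Prop) {a c c' v : V}
    (houta : {u | D a u}.ncard = 2)
    (h1 : PairedAt D a c v) (h2 : PairedAt D a c' v) : c = c' := by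
  obtain ⟨hc, hav, h1'⟩ := h1
  obtain ⟨hc', -, h2'⟩ := h2
  obtain ⟨v', hv'ne, hsout⟩ := ncard_two_other houta hav
  have hv' : D a v' := by have : v' ∈ {u | D a u} := by rw [hsout]; simp
                          exact this
  rcases h1' with ⟨hm1, ho1⟩ | ⟨hm1, ho1⟩ <;> rcases h2' with ⟨hm2, ho2⟩ | ⟨hm2, ho2⟩
  · exact le_antisymm (hm1 c' hc') (hm2 c hc)
  · exact absurd (le_antisymm (ho2 v' hv') (ho1 v' hv')) hv'ne
  · exact absurd (le_antisymm (ho1 v' hv') (ho2 v' hv')) hv'ne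
  · exact le_antisymm (hm2 c hc) (hm1 c' hc')

end helpers

/-- The graph `𝒢` obtained from an Eulerian orientation `D` of a 4-regular graph `G`
(with indegree and outdegree 2 at every vertex) is 3-regular: every vertex of `𝒢`
(a directed edge of `G_d`) has exactly 3 neighbors. -/
theorem derived_graph_is_cubic {V : Type*} [Fintype V] [LinearOrder V]
    (G : SimpleGraph V) (D : V → V → Prop)
    (hreg : ∀ v : V, (G.neighborSet v).ncard = 4)
    (hDG : ∀ u v : V, D u v → G.Adj u v)
    (hor : ∀ u v : V, G.Adj u v → (D u v ↔ ¬ D v u))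
    (hin : ∀ v : V, {u : V | D u v}.ncard = 2)
    (hout : ∀ v : V, {u : V | D v u}.ncard = 2)
    (𝒢 : SimpleGraph {p : V × V // D p.1 p.2})
    (hAdj : ∀ e f : {p : V × V // D p.1 p.2}, 𝒢.Adj e f ↔ e ≠ f ∧
      (e.1.2 = f.1.2 ∨
       (e.1.2 = f.1.1 ∧ PairedAt D e.1.2 e.1.1 f.1.2) ∨
       (f.1.2 = e.1.1 ∧ PairedAt D f.1.2 f.1.1 e.1.2))) :
    ∀ e : {p : V × V // D p.1 p.2}, (𝒢.neighborSet e).ncard = 3 := by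
  rintro ⟨⟨a, v⟩, hav⟩
  obtain ⟨a', ha'ne, hsin⟩ := ncard_two_other (hin v) (show a ∈ {u | D u v} from hav)
  have hda' : D a' v := by
    have : a' ∈ {u | D u v} := by rw [hsin]; simp
    exact this
  obtain ⟨b, hb⟩ := pairedAt_exists_out D (hin v) (hout v) hav
  obtain ⟨c, hc⟩ := pairedAt_exists_in D (hin a) (hout a) hav
  have hvb : D v b := hb.2.1
  have hca : D c a := hc.1
  have hav_ne : a ≠ v := (hDG a v hav).ne
  have hvb_ne : v ≠ b := (hDG v b hvb).ne
  have hca_ne : c ≠ a := (hDG c a hca).ne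
  have hcv_ne : c ≠ v :=
    fun h => ((hor a v (hDG a v hav)).mp hav) (h ▸ hca)
  have hset : 𝒢.neighborSet ⟨(a, v), hav⟩ =
      ({⟨(a', v), hda'⟩, ⟨(v, b), hvb⟩, ⟨(c, a), hca⟩} :
        Set {p : V × V // D p.1 p.2}) := by
    ext f
    obtain ⟨⟨p, q⟩, hpq⟩ := f
    simp only [SimpleGraph.mem_neighborSet, hAdj, Set.mem_insert_iff,
      Set.mem_singleton_iff, Subtype.mk.injEq, Prod.mk.injEq, ne_eq]
    constructor
    · rintro ⟨hne, heq | ⟨h1, h2⟩ | ⟨h1, h2⟩⟩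
      · -- same head: v = q
        subst heq
        have : p ∈ ({a, a'} : Set V) := hsin ▸ hpq
        rcases this with rfl | hp
        · exact absurd ⟨rfl, rfl⟩ hne
        · exact Or.inl ⟨hp, rfl⟩
      · -- v = p, PairedAt D v a q
        subst h1
        exact Or.inr (Or.inl ⟨rfl, pairedAt_unique_out D (hin v) h2 hb⟩)
      · -- q = a, PairedAt D a p v
        exact Or.inr (Or.inr ⟨pairedAt_unique_in D (hout a) (h1 ▸ h2) hc, h1⟩)
    · rintro (⟨rfl, rfl⟩ | ⟨rfl, rfl⟩ | ⟨rfl, rfl⟩)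
      · exact ⟨by rintro ⟨rfl, -⟩; exact ha'ne rfl, Or.inl rfl⟩
      · exact ⟨by rintro ⟨rfl, -⟩; exact hav_ne rfl, Or.inr (Or.inl ⟨rfl, hb⟩)⟩
      · exact ⟨by rintro ⟨-, rfl⟩; exact hav_ne rfl, Or.inr (Or.inr ⟨rfl, hc⟩)⟩
  rw [hset, Set.ncard_eq_three]
  exact ⟨_, _, _,
    fun h => hvb_ne (congrArg (fun x => x.1.2) h),
    fun h => (Ne.symm hav_ne) (congrArg (fun x => x.1.2) h),
    fun h => (Ne.symm hcv_ne) (congrArg (fun x => x.1.1) h), rfl⟩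
end

section
/- The Petersen graph can be decomposed into five edge-disjoint paths on 4 vertices (P4 paths). -/
open SimpleGraph Finset

/-- The Petersen graph, as the Kneser graph `K(5,2)`. -/
def petersen : SimpleGraph {s : Finset (Fin 5) // s.card = 2} where
  Adj a b := Disjoint (a : Finset (Fin 5)) (b : Finset (Fin 5))
  symm := ⟨fun a b h => h.symm⟩
  loopless := ⟨by
    rintro ⟨s, hs⟩ h
    have : s = ∅ := by simpa using disjoint_self.mp h
    simp [this] at hs⟩

instance : DecidableRel petersen.Adj := fun a b =>
  inferInstanceAs (Decidable (Disjoint (a : Finset (Fin 5)) (b : Finset (Fin 5))))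

def IsP4EdgeSet {V : Type*} [DecidableEq V] (G : SimpleGraph V) (p : Finset (Sym2 V)) : Prop :=
  ∃ (a b : V) (w : G.Walk a b), w.IsPath ∧ w.length = 3 ∧ p = w.edges.toFinset

def vt (a b : Fin 5) (h : ({a,b} : Finset (Fin 5)).card = 2 := by decide) :
    {s : Finset (Fin 5) // s.card = 2} := ⟨{a,b}, h⟩

def mkP4 (a b c d : {s : Finset (Fin 5) // s.card = 2})
    (h1 : petersen.Adj a b) (h2 : petersen.Adj b c) (h3 : petersen.Adj c d) :
    petersen.Walk a d := .cons h1 (.cons h2 (.cons h3 .nil))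

def w1 : petersen.Walk (vt 2 4) (vt 0 4) :=
  mkP4 (vt 2 4) (vt 0 1) (vt 2 3) (vt 0 4) (by decide) (by decide) (by decide)
def w2 : petersen.Walk (vt 1 4) (vt 0 1) :=
  mkP4 (vt 1 4) (vt 0 2) (vt 3 4) (vt 0 1) (by decide) (by decide) (by decide)
def w3 : petersen.Walk (vt 0 3) (vt 0 2) :=
  mkP4 (vt 0 3) (vt 2 4) (vt 1 3) (vt 0 2) (by decide) (by decide) (by decide)
def w4 : petersen.Walk (vt 1 2) (vt 2 3) :=
  mkP4 (vt 1 2) (vt 0 3) (vt 1 4) (vt 2 3) (by decide) (by decide) (by decide)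
def w5 : petersen.Walk (vt 3 4) (vt 1 3) :=
  mkP4 (vt 3 4) (vt 1 2) (vt 0 4) (vt 1 3) (by decide) (by decide) (by decide)

/-- The Petersen graph decomposes into five edge-disjoint paths on 4 vertices. -/
theorem petersen_P4_decomposition :
    ∃ P : Finset (Finset (Sym2 {s : Finset (Fin 5) // s.card = 2})),
      P.card = 5 ∧
      (∀ p ∈ P, IsP4EdgeSet petersen p) ∧
      (P : Set (Finset (Sym2 {s : Finset (Fin 5) // s.card = 2}))).PairwiseDisjoint id ∧
      P.biUnion id = petersen.edgeFinset := by
  refine ⟨{w1.edges.toFinset, w2.edges.toFinset, w3.edges.toFinset,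
    w4.edges.toFinset, w5.edges.toFinset}, by decide, ?_, ?_, by decide⟩
  · intro p hp
    fin_cases hp
    · exact ⟨_, _, w1, by rw [Walk.isPath_def]; decide, rfl, rfl⟩
    · exact ⟨_, _, w2, by rw [Walk.isPath_def]; decide, rfl, rfl⟩
    · exact ⟨_, _, w3, by rw [Walk.isPath_def]; decide, rfl, rfl⟩
    · exact ⟨_, _, w4, by rw [Walk.isPath_def]; decide, rfl, rfl⟩
    · exact ⟨_, _, w5, by rw [Walk.isPath_def]; decide, rfl, rfl⟩
  · intro a ha b hb hab
    simp only [Finset.coe_insert, Set.mem_insert_iff, Finset.coe_singleton,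
      Set.mem_singleton_iff] at ha hb
    rcases ha with rfl|rfl|rfl|rfl|rfl <;> rcases hb with rfl|rfl|rfl|rfl|rfl <;>
      first | (exact absurd rfl hab) | (exact Finset.disjoint_left.mpr (by decide))
end
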